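/- Let λ₁ > 0 and λ₂ > μ₂ > 0, and for j ≥ 1 set p_j = (λ₁(λ₂−μ₂)/λ₂²)·B(j, 1 + λ₁/(λ₂−μ₂))·₂F₁(j+1, 1 + λ₁/(λ₂−μ₂), j+1+λ₁/(λ₂−μ₂), μ₂/λ₂). Then p_j ∼ c₂·j^{−(1+λ₁/(λ₂−μ₂))} as j → ∞, i.e. lim_{j→∞} p_j·j^{1+λ₁/(λ₂−μ₂)} = c₂, where c₂ = (λ₁/λ₂)·(λ₂/(λ₂−μ₂))^{λ₁/(λ₂−μ₂)}·Γ(1 + λ₁/(λ₂−μ₂)). -/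

import Mathlib

open Filter Topology MeasureTheory

/-- The Beta function `B(a,b) = ∫₀¹ s^(a-1) (1-s)^(b-1) ds`. -/
noncomputable def betaFn (a b : ℝ) : ℝ :=
  ∫ s in (0:ℝ)..1, s ^ (a - 1) * (1 - s) ^ (b - 1)

/-- The Gauss hypergeometric function
`₂F₁(a,b,c,z) = (1/B(b,c-b)) ∫₀¹ s^(b-1) (1-s)^(c-b-1) (1-sz)^(-a) ds`. -/
noncomputable def gauss2F1 (a b c z : ℝ) : ℝ :=
  (betaFn b (c - b))⁻¹ * ∫ s in (0:ℝ)..1, s ^ (b - 1) * (1 - s) ^ (c - b - 1) * (1 - s * z) ^ (-a)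

section Helpers
open Set Real

lemma betaFn_symm (a b : ℝ) : betaFn a b = betaFn b a := by
  unfold betaFn
  have h := intervalIntegral.integral_comp_sub_left (a := (0:ℝ)) (b := 1)
    (fun x => x ^ (b - 1) * (1 - x) ^ (a - 1)) 1
  simp only [sub_zero, sub_self] at h
  rw [← h]
  apply intervalIntegral.integral_congr
  intro x hx
  simp only [sub_sub_cancel]
  ring

lemma betaFn_pos {a b : ℝ} (ha : 1 ≤ a) (hb : 1 ≤ b) : 0 < betaFn a b := by
  unfold betaFn
  apply intervalIntegral.intervalIntegral_pos_of_pos_on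
  · apply ContinuousOn.intervalIntegrable
    apply ContinuousOn.mul
    · exact continuousOn_id.rpow_const (fun x _ => Or.inr (by linarith))
    · exact (continuousOn_const.sub continuousOn_id).rpow_const (fun x _ => Or.inr (by linarith))
  · intro x hx
    exact mul_pos (rpow_pos_of_pos hx.1 _) (rpow_pos_of_pos (by linarith [hx.2]) _)
  · norm_num

lemma key_ineq {z x : ℝ} (hz0 : 0 ≤ z) (hz1 : z ≤ 1) (hx0 : 0 ≤ x) (hx1 : x ≤ 1) :
    (1 - x) * Real.exp ((1 - z) * x) ≤ 1 - z * x := by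
  set f : ℝ → ℝ := fun t => (1 - z * t) - (1 - t) * Real.exp ((1 - z) * t) with hf
  have hderiv : ∀ t : ℝ, HasDerivAt f (-z + Real.exp ((1 - z) * t) * (z + t * (1 - z))) t := by
    intro t
    have h1 : HasDerivAt (fun t : ℝ => 1 - z * t) (-z) t := by
      simpa using ((hasDerivAt_id t).const_mul z).const_sub 1
    have h2 : HasDerivAt (fun t : ℝ => Real.exp ((1 - z) * t)) ((1 - z) * Real.exp ((1 - z) * t)) t := by
      simpa [mul_comm] using ((hasDerivAt_id t).const_mul (1 - z)).exp
    have h3 : HasDerivAt (fun t : ℝ => 1 - t) (-1) t := by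
      simpa using (hasDerivAt_id t).const_sub 1
    have h4 := h1.sub (h3.mul h2)
    exact h4.congr_deriv (by ring)
  have hmono : MonotoneOn f (Set.Icc 0 1) := by
    apply monotoneOn_of_deriv_nonneg (convex_Icc 0 1)
    · exact (Continuous.continuousOn (by fun_prop))
    · exact fun t _ => (hderiv t).differentiableAt.differentiableWithinAt
    · intro t ht
      rw [interior_Icc] at ht
      rw [(hderiv t).deriv]
      have h5 : (1:ℝ) ≤ Real.exp ((1 - z) * t) :=
        Real.one_le_exp (by nlinarith [ht.1, ht.2])
      have h6 : 0 ≤ z + t * (1 - z) := by nlinarith [ht.1.le, ht.2.le]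
      have h7 : 1 * (z + t * (1 - z)) ≤ Real.exp ((1 - z) * t) * (z + t * (1 - z)) :=
        mul_le_mul_of_nonneg_right h5 h6
      have h8 : 0 ≤ t * (1 - z) := mul_nonneg ht.1.le (by linarith)
      linarith
  have h0 : f 0 ≤ f x := hmono ⟨le_refl 0, zero_le_one⟩ ⟨hx0, hx1⟩ hx0
  simp only [hf, mul_zero, sub_zero, Real.exp_zero, mul_one, sub_self] at h0
  linarith

lemma tendsto_aux (t d : ℝ) :
    Tendsto (fun j : ℕ => (1 + t / (j : ℝ)) ^ ((j : ℝ) + d)) atTop (𝓝 (Real.exp t)) := by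
  have h1 : Tendsto (fun x : ℝ => (1 + t / x) ^ (x + d)) atTop (𝓝 (Real.exp t)) := by
    have hbase : Tendsto (fun x : ℝ => 1 + t / x) atTop (𝓝 1) := by
      simpa [div_eq_mul_inv] using ((tendsto_inv_atTop_zero (𝕜 := ℝ)).const_mul t).const_add 1
    have h2 : Tendsto (fun x : ℝ => (1 + t / x) ^ d) atTop (𝓝 1) := by
      have h3 := (Real.continuousAt_rpow_const 1 d (Or.inl one_ne_zero)).tendsto.comp hbase
      simpa [Function.comp_def] using h3
    have h4 := (tendsto_one_add_div_rpow_exp t).mul h2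
    rw [mul_one] at h4
    apply h4.congr'
    filter_upwards [hbase.eventually_const_le (by norm_num : (1:ℝ)/2 < 1)] with x hx
    rw [← Real.rpow_add (by linarith)]
  exact h1.comp tendsto_natCast_atTop_atTop

lemma tendsto_pointwise {γ z : ℝ} (hz0 : 0 < z) (hz1 : z < 1) {u : ℝ} (hu : 0 < u) :
    Tendsto (fun j : ℕ =>
        u ^ γ * (1 - u / (j:ℝ)) ^ ((j:ℝ) - 1) * (1 - u / (j:ℝ) * z) ^ (-((j:ℝ) + 1)))
      atTop (𝓝 (u ^ γ * Real.exp (-((1 - z) * u)))) := by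
  have h2 : Tendsto (fun j : ℕ => (1 - u / (j:ℝ)) ^ ((j:ℝ) - 1)) atTop (𝓝 (Real.exp (-u))) := by
    apply (tendsto_aux (-u) (-1)).congr
    intro j
    rw [neg_div, ← sub_eq_add_neg, ← sub_eq_add_neg]
  have h3 : Tendsto (fun j : ℕ => (1 - u / (j:ℝ) * z) ^ (-((j:ℝ) + 1))) atTop
      (𝓝 (Real.exp (u * z))) := by
    have h4 : Tendsto (fun j : ℕ => ((1 + (-(u * z)) / (j:ℝ)) ^ ((j:ℝ) + 1))⁻¹) atTop
        (𝓝 (Real.exp (-(u * z)))⁻¹) := (tendsto_aux (-(u * z)) 1).inv₀ (Real.exp_ne_zero _)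
    rw [← Real.exp_neg, neg_neg] at h4
    apply h4.congr'
    filter_upwards [(tendsto_natCast_atTop_atTop (R := ℝ)).eventually_gt_atTop (u * z)] with j hj
    have hj0 : (0:ℝ) < (j:ℝ) := lt_of_le_of_lt (by positivity) hj
    have hb : (0:ℝ) ≤ 1 + -(u * z) / (j:ℝ) := by
      have : u * z / (j:ℝ) < 1 := (div_lt_one hj0).2 hj
      rw [neg_div]; linarith
    rw [← Real.rpow_neg hb]
    congr 1
    rw [div_mul_eq_mul_div, neg_div, ← sub_eq_add_neg]
  have h5 := ((tendsto_const_nhds (x := u ^ γ) (f := atTop (α := ℕ))).mul h2).mul h3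
  have heq : u ^ γ * Real.exp (-u) * Real.exp (u * z) = u ^ γ * Real.exp (-((1 - z) * u)) := by
    rw [mul_assoc, ← Real.exp_add]; ring_nf
  rwa [heq] at h5

lemma bound_aux {γ z : ℝ} (hz0 : 0 < z) (hz1 : z < 1) {j : ℕ} (hj : 2 ≤ j) {u : ℝ}
    (hu : 0 < u) (huj : u ≤ (j:ℝ)) :
    u ^ γ * (1 - u / (j:ℝ)) ^ ((j:ℝ) - 1) * (1 - u / (j:ℝ) * z) ^ (-((j:ℝ) + 1))
      ≤ (1 - z) ^ (-2:ℝ) * (u ^ γ * Real.exp (-((1 - z) / 2 * u))) := by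
  have hJ2 : (2:ℝ) ≤ (j:ℝ) := by exact_mod_cast hj
  have hJ0 : (0:ℝ) < (j:ℝ) := by linarith
  set x := u / (j:ℝ) with hxdef
  have hx0 : 0 < x := div_pos hu hJ0
  have hx1 : x ≤ 1 := (div_le_one hJ0).2 huj
  have hA0 : (0:ℝ) ≤ 1 - x := by linarith
  have hxz : x * z ≤ z := by nlinarith
  have hDz : 1 - z ≤ 1 - x * z := by linarith
  have hDpos : (0:ℝ) < 1 - x * z := by linarith
  have step1 : (1 - x * z) ^ (-((j:ℝ) + 1))
      = (1 - x * z) ^ (-((j:ℝ) - 1)) * (1 - x * z) ^ (-2:ℝ) := by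
    rw [← Real.rpow_add hDpos]; ring_nf
  have step2 : (1 - x) ^ ((j:ℝ) - 1) * (1 - x * z) ^ (-((j:ℝ) - 1))
      = ((1 - x) / (1 - x * z)) ^ ((j:ℝ) - 1) := by
    rw [Real.div_rpow hA0 hDpos.le, Real.rpow_neg hDpos.le, div_eq_mul_inv]
  have h5 : (1 - x) / (1 - x * z) ≤ Real.exp (-((1 - z) * x)) := by
    rw [div_le_iff₀ hDpos]
    have hkey := key_ineq hz0.le hz1.le hx0.le hx1
    have h6 : (1 - x) = ((1 - x) * Real.exp ((1 - z) * x)) * Real.exp (-((1 - z) * x)) := by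
      rw [mul_assoc, ← Real.exp_add]; simp
    rw [h6]
    calc ((1 - x) * Real.exp ((1 - z) * x)) * Real.exp (-((1 - z) * x))
        ≤ (1 - z * x) * Real.exp (-((1 - z) * x)) :=
          mul_le_mul_of_nonneg_right hkey (Real.exp_pos _).le
      _ = Real.exp (-((1 - z) * x)) * (1 - x * z) := by ring
  have step3 : ((1 - x) / (1 - x * z)) ^ ((j:ℝ) - 1) ≤ Real.exp (-((1 - z) / 2 * u)) := by
    calc ((1 - x) / (1 - x * z)) ^ ((j:ℝ) - 1)
        ≤ (Real.exp (-((1 - z) * x))) ^ ((j:ℝ) - 1) :=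
          Real.rpow_le_rpow (div_nonneg hA0 hDpos.le) h5 (by linarith)
      _ = Real.exp (-((1 - z) * x) * ((j:ℝ) - 1)) := (Real.exp_mul _ _).symm
      _ ≤ Real.exp (-((1 - z) / 2 * u)) := by
          apply Real.exp_le_exp.2
          have hxJ : x * (j:ℝ) = u := div_mul_cancel₀ u hJ0.ne'
          have h2x : 2 * x ≤ u := by nlinarith [hxJ, hx0.le, hJ2]
          calc -((1 - z) * x) * ((j:ℝ) - 1) = -((1 - z) * (u - x)) := by rw [← hxJ]; ring
            _ ≤ -((1 - z) / 2 * u) := by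
                nlinarith [mul_le_mul_of_nonneg_left h2x (show (0:ℝ) ≤ 1 - z by linarith)]
  have step4 : (1 - x * z) ^ (-2:ℝ) ≤ (1 - z) ^ (-2:ℝ) := by
    rw [Real.rpow_neg hDpos.le, Real.rpow_neg (by linarith : (0:ℝ) ≤ 1 - z)]
    exact inv_anti₀ (Real.rpow_pos_of_pos (by linarith) _)
      (Real.rpow_le_rpow (by linarith) hDz (by norm_num))
  calc u ^ γ * (1 - x) ^ ((j:ℝ) - 1) * (1 - x * z) ^ (-((j:ℝ) + 1))
      = u ^ γ * (((1 - x) / (1 - x * z)) ^ ((j:ℝ) - 1) * (1 - x * z) ^ (-2:ℝ)) := by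
        rw [step1, ← step2]; ring
    _ ≤ u ^ γ * (Real.exp (-((1 - z) / 2 * u)) * (1 - z) ^ (-2:ℝ)) := by
        apply mul_le_mul_of_nonneg_left _ (Real.rpow_nonneg hu.le γ)
        exact mul_le_mul step3 step4 (Real.rpow_nonneg hDpos.le _) (Real.exp_pos _).le
    _ = (1 - z) ^ (-2:ℝ) * (u ^ γ * Real.exp (-((1 - z) / 2 * u))) := by ring

lemma int_aux {γ r : ℝ} (hγ0 : 0 < γ) (hr : 0 < r) :
    IntegrableOn (fun u : ℝ => u ^ γ * Real.exp (-(r * u))) (Set.Ioi 0) := by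
  have h := integrableOn_rpow_mul_exp_neg_mul_rpow (s := γ) (p := 1) (b := r)
    (by linarith) zero_lt_one hr
  apply h.congr_fun ?_ measurableSet_Ioi
  intro x hx
  simp [Real.rpow_one, neg_mul]

lemma val_aux {γ z : ℝ} (hγ0 : 0 < γ) (hz1 : z < 1) :
    ∫ u in Set.Ioi (0:ℝ), u ^ γ * Real.exp (-((1 - z) * u))
      = (1 / (1 - z)) ^ (1 + γ) * Real.Gamma (1 + γ) := by
  have h := Real.integral_rpow_mul_exp_neg_mul_Ioi (a := 1 + γ) (r := 1 - z)
    (by linarith) (by linarith)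
  simpa [add_sub_cancel_left] using h

lemma cov_aux {γ z : ℝ} (hγ0 : 0 < γ) {j : ℕ} (hj : 1 ≤ j) :
    (j:ℝ) ^ (1 + γ) * ∫ s in (0:ℝ)..1, s ^ γ * (1 - s) ^ ((j:ℝ) - 1) * (1 - s * z) ^ (-((j:ℝ) + 1))
      = ∫ u in Set.Ioi (0:ℝ), Set.indicator (Set.Ioc 0 (j:ℝ))
          (fun u => u ^ γ * (1 - u / (j:ℝ)) ^ ((j:ℝ) - 1) * (1 - u / (j:ℝ) * z) ^ (-((j:ℝ) + 1))) u := by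
  have hJ0 : (0:ℝ) < (j:ℝ) := by exact_mod_cast hj
  rw [setIntegral_indicator measurableSet_Ioc,
    Set.inter_eq_self_of_subset_right Set.Ioc_subset_Ioi_self,
    ← intervalIntegral.integral_of_le hJ0.le]
  have hcomp : Set.EqOn
      (fun u => u ^ γ * (1 - u / (j:ℝ)) ^ ((j:ℝ) - 1) * (1 - u / (j:ℝ) * z) ^ (-((j:ℝ) + 1)))
      (fun x => (fun s => (j:ℝ) ^ γ * (s ^ γ * (1 - s) ^ ((j:ℝ) - 1) * (1 - s * z) ^ (-((j:ℝ) + 1)))) (x / (j:ℝ)))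
      (Set.uIcc (0:ℝ) (j:ℝ)) := by
    intro x hx
    rw [Set.uIcc_of_le hJ0.le] at hx
    simp only
    rw [Real.div_rpow hx.1 hJ0.le]
    have hne : ((j:ℝ) ^ γ) ≠ 0 := (Real.rpow_pos_of_pos hJ0 γ).ne'
    field_simp
  rw [intervalIntegral.integral_congr hcomp,
    intervalIntegral.integral_comp_div (c := (j:ℝ)) (fun s => (j:ℝ) ^ γ * (s ^ γ * (1 - s) ^ ((j:ℝ) - 1) * (1 - s * z) ^ (-((j:ℝ) + 1)))) hJ0.ne']
  rw [zero_div, div_self hJ0.ne', intervalIntegral.integral_const_mul, smul_eq_mul,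
    Real.rpow_add hJ0, Real.rpow_one]
  ring

lemma main_aux {γ z : ℝ} (hγ0 : 0 < γ) (hz0 : 0 < z) (hz1 : z < 1) :
    Tendsto (fun j : ℕ => ∫ u in Set.Ioi (0:ℝ), Set.indicator (Set.Ioc 0 (j:ℝ))
        (fun u => u ^ γ * (1 - u / (j:ℝ)) ^ ((j:ℝ) - 1) * (1 - u / (j:ℝ) * z) ^ (-((j:ℝ) + 1))) u)
      atTop (𝓝 ((1 / (1 - z)) ^ (1 + γ) * Real.Gamma (1 + γ))) := by
  rw [← val_aux hγ0 hz1]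
  apply tendsto_integral_filter_of_dominated_convergence
    (bound := fun u => (1 - z) ^ (-2:ℝ) * (u ^ γ * Real.exp (-((1 - z) / 2 * u))))
  · apply Eventually.of_forall
    intro j
    apply (Measurable.indicator ?_ measurableSet_Ioc).aestronglyMeasurable
    fun_prop
  · filter_upwards [eventually_ge_atTop 2] with j hj
    rw [ae_restrict_iff' measurableSet_Ioi]
    apply Eventually.of_forall
    intro u hu
    rw [Set.mem_Ioi] at hu
    by_cases hmem : u ∈ Set.Ioc 0 (j:ℝ)
    · have hJ2 : (2:ℝ) ≤ (j:ℝ) := by exact_mod_cast hj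
      have hJ0 : (0:ℝ) < (j:ℝ) := by linarith
      have h1 : (0:ℝ) ≤ 1 - u / (j:ℝ) := by
        rw [sub_nonneg]; exact (div_le_one hJ0).2 hmem.2
      have hx1 : u / (j:ℝ) ≤ 1 := (div_le_one hJ0).2 hmem.2
      have hx0 : 0 < u / (j:ℝ) := div_pos hu hJ0
      have h2 : (0:ℝ) ≤ 1 - u / (j:ℝ) * z := by nlinarith
      rw [Set.indicator_of_mem hmem, Real.norm_eq_abs, abs_of_nonneg
        (mul_nonneg (mul_nonneg (Real.rpow_nonneg hu.le _) (Real.rpow_nonneg h1 _))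
          (Real.rpow_nonneg h2 _))]
      exact bound_aux hz0 hz1 hj hu hmem.2
    · rw [Set.indicator_of_notMem hmem, norm_zero]
      exact mul_nonneg (Real.rpow_nonneg (by linarith) _)
        (mul_nonneg (Real.rpow_nonneg hu.le _) (Real.exp_pos _).le)
  · exact (int_aux hγ0 (r := (1 - z) / 2) (by linarith)).const_mul _
  · rw [ae_restrict_iff' measurableSet_Ioi]
    apply Eventually.of_forall
    intro u hu
    rw [Set.mem_Ioi] at hu
    apply (tendsto_pointwise hz0 hz1 hu).congr'
    filter_upwards [(tendsto_natCast_atTop_atTop (R := ℝ)).eventually_ge_atTop u] with j hj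
    rw [Set.indicator_of_mem (show u ∈ Set.Ioc 0 (j:ℝ) from ⟨hu, hj⟩)]

end Helpers

/-- Supercritical asymptotics: for
`p_j = (λ₁(λ₂-μ₂)/λ₂²) B(j, 1+γ) ₂F₁(j+1, 1+γ, j+1+γ, μ₂/λ₂)` with `γ = λ₁/(λ₂-μ₂)`,
one has `p_j j^(1+γ) → c₂ = (λ₁/λ₂) (λ₂/(λ₂-μ₂))^γ Γ(1+γ)` as `j → ∞`. -/
theorem asymptotics_supercritical (lam1 lam2 mu2 : ℝ)
    (hlam1 : 0 < lam1) (hmu2 : 0 < mu2) (h : mu2 < lam2) :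
    Tendsto
      (fun j : ℕ =>
        (lam1 * (lam2 - mu2) / lam2 ^ 2 * betaFn j (1 + lam1 / (lam2 - mu2)) *
            gauss2F1 (j + 1) (1 + lam1 / (lam2 - mu2)) (j + 1 + lam1 / (lam2 - mu2))
              (mu2 / lam2)) *
          (j : ℝ) ^ (1 + lam1 / (lam2 - mu2)))
      atTop
      (𝓝 (lam1 / lam2 * (lam2 / (lam2 - mu2)) ^ (lam1 / (lam2 - mu2)) *
        Real.Gamma (1 + lam1 / (lam2 - mu2)))) := by
  have hlam2 : 0 < lam2 := hmu2.trans h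
  have hsub : 0 < lam2 - mu2 := sub_pos.2 h
  set γ := lam1 / (lam2 - mu2) with hγdef
  set z := mu2 / lam2 with hzdef
  have hγ0 : 0 < γ := div_pos hlam1 hsub
  have hz0 : 0 < z := div_pos hmu2 hlam2
  have hz1 : z < 1 := (div_lt_one hlam2).2 h
  have hL : lam1 * (lam2 - mu2) / lam2 ^ 2 * ((1 / (1 - z)) ^ (1 + γ) * Real.Gamma (1 + γ))
      = lam1 / lam2 * (lam2 / (lam2 - mu2)) ^ γ * Real.Gamma (1 + γ) := by
    have h1z : (1:ℝ) - z = (lam2 - mu2) / lam2 := by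
      rw [hzdef]; field_simp
    rw [h1z, one_div_div, Real.rpow_add (div_pos hlam2 hsub), Real.rpow_one]
    have hne : (lam2 - mu2) ≠ 0 := hsub.ne'
    field_simp
  rw [← hL]
  apply Tendsto.congr' _ ((main_aux hγ0 hz0 hz1).const_mul (lam1 * (lam2 - mu2) / lam2 ^ 2))
  filter_upwards [eventually_ge_atTop 2] with j hj
  have hj1 : 1 ≤ j := le_trans one_le_two hj
  have hJ1 : (1:ℝ) ≤ (j:ℝ) := by exact_mod_cast hj1
  rw [← cov_aux hγ0 (z := z) hj1]
  simp only [gauss2F1]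
  have harg : (j:ℝ) + 1 + γ - (1 + γ) = (j:ℝ) := by ring
  have hexp : (1:ℝ) + γ - 1 = γ := by ring
  rw [harg, hexp, betaFn_symm (j:ℝ) (1 + γ)]
  have hbne : betaFn (1 + γ) (j:ℝ) ≠ 0 := (betaFn_pos (by linarith) hJ1).ne'
  field_simp
  simp only [mul_comm z]
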